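/- Let A be a nearly simple algebra over a field F with unique non-trivial ideal I_A. Then I_A, regarded as a (non-unital) algebra, is simple: I_A · I_A ≠ {0} and the only two-sided ideals of the ring I_A are {0} and I_A. -/

import Mathlib

/-- `A` is nearly simple with unique non-trivial two-sided ideal `I`: `I ≠ ⊥`, `I ≠ ⊤`,
every two-sided ideal other than `⊥` and `⊤` equals `I`, and `I * I ≠ 0`. -/
def IsNearlySimpleWith {A : Type*} [Ring A] (I : TwoSidedIdeal A) : Prop :=
  I ≠ ⊥ ∧ I ≠ ⊤ ∧
    (∀ J : TwoSidedIdeal A, J ≠ ⊥ → J ≠ ⊤ → J = I) ∧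
    (∃ x ∈ I, ∃ y ∈ I, x * y ≠ 0)

/-- If `A` is a nearly simple algebra over a field `F` with unique non-trivial ideal `I`,
then `I` is a simple (non-unital) algebra: `I * I ≠ {0}` and the only two-sided ideals of
the ring `I` (additive subgroups `J ⊆ I` with `I·J ⊆ J` and `J·I ⊆ J`) are `{0}` and
`I`. -/
theorem IsNearlySimpleWith.ideal_simple
    (F A : Type*) [Field F] [Ring A] [Algebra F A]
    (I : TwoSidedIdeal A) (hA : IsNearlySimpleWith I) :
    (∃ x ∈ I, ∃ y ∈ I, x * y ≠ 0) ∧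
    (∀ J : AddSubgroup A, (J : Set A) ⊆ (I : Set A) →
      (∀ x ∈ I, ∀ y ∈ J, x * y ∈ J ∧ y * x ∈ J) →
      ((J : Set A) = {0} ∨ (J : Set A) = (I : Set A))) := by
  obtain ⟨hbot, htop, huniq, x, hx, y, hy, hxy⟩ := hA
  refine ⟨⟨x, hx, y, hy, hxy⟩, ?_⟩
  intro J hJsub hJmul
  by_cases hJ0 : (J : Set A) = {0}
  · exact Or.inl hJ0
  right
  -- there is a nonzero element of J
  obtain ⟨z, hzJ, hz0⟩ : ∃ z ∈ J, z ≠ 0 := by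
    by_contra h
    push_neg at h
    apply hJ0
    ext a
    simp only [Set.mem_singleton_iff]
    exact ⟨fun ha => h a ha, fun ha => ha ▸ J.zero_mem⟩
  -- a two-sided ideal ≤ I that is nonzero equals I
  have key : ∀ K : TwoSidedIdeal A, (K : Set A) ⊆ (I : Set A) →
      (∃ w ∈ K, w ≠ (0 : A)) → K = I := by
    intro K hKI ⟨w, hwK, hw0⟩
    refine huniq K ?_ ?_
    · intro h
      rw [h] at hwK
      exact hw0 hwK
    · intro h
      apply htop
      refine le_antisymm le_top ?_
      intro a _
      have : a ∈ K := h ▸ trivial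
      exact hKI this
  -- `span J = I`
  have hspanJ : TwoSidedIdeal.span (J : Set A) = I := by
    apply key
    · intro a ha
      exact TwoSidedIdeal.mem_span_iff.mp ha I hJsub
    · exact ⟨z, TwoSidedIdeal.subset_span hzJ, hz0⟩
  -- triple products land in J
  have hT : ∀ u ∈ I, ∀ w ∈ I, ∀ v ∈ I, u * w * v ∈ J := by
    intro u hu w hw v hv
    have hw' : w ∈ TwoSidedIdeal.span (J : Set A) := hspanJ ▸ hw
    rw [TwoSidedIdeal.mem_span_iff_mem_addSubgroup_closure] at hw'
    clear hw
    induction hw' using AddSubgroup.closure_induction with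
    | mem g hg =>
      obtain ⟨-, ⟨r, -, b, hbJ, rfl⟩, t, -, rfl⟩ := hg
      show u * (r * b * t) * v ∈ J
      have h1 : u * (r * b * t) * v = (u * r) * (b * (t * v)) := by
        noncomm_ring
      rw [h1]
      have h2 : b * (t * v) ∈ J := (hJmul (t * v) (I.mul_mem_left t v hv) b hbJ).2
      exact (hJmul (u * r) (I.mul_mem_right u r hu) _ h2).1
    | zero => simpa using J.zero_mem
    | add a b _ _ ha hb => simpa [mul_add, add_mul] using J.add_mem ha hb
    | neg a _ ha => simpa [mul_neg, neg_mul] using J.neg_mem ha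
  -- `span {u*v : u,v ∈ I} = I`
  set S : Set A := {a | ∃ u ∈ I, ∃ v ∈ I, a = u * v} with hS
  have hspanS : TwoSidedIdeal.span S = I := by
    apply key
    · intro a ha
      refine TwoSidedIdeal.mem_span_iff.mp ha I ?_
      rintro b ⟨u, hu, v, hv, rfl⟩
      exact I.mul_mem_right u v hu
    · exact ⟨x * y, TwoSidedIdeal.subset_span ⟨x, hx, y, hy, rfl⟩, hxy⟩
  -- products of two elements of I lie in J
  have hprod : ∀ u ∈ I, ∀ v ∈ I, u * v ∈ J := by
    intro u hu v hv
    have hu' : u ∈ TwoSidedIdeal.span S := hspanS ▸ hu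
    rw [TwoSidedIdeal.mem_span_iff_mem_addSubgroup_closure] at hu'
    clear hu
    induction hu' using AddSubgroup.closure_induction with
    | mem g hg =>
      obtain ⟨-, ⟨r, -, b, ⟨u', hu', v', hv', rfl⟩, rfl⟩, t, -, rfl⟩ := hg
      show r * (u' * v') * t * v ∈ J
      have h1 : r * (u' * v') * t * v = (r * u') * v' * (t * v) := by
        noncomm_ring
      rw [h1]
      exact hT _ (I.mul_mem_left r u' hu') _ hv' _ (I.mul_mem_left t v hv)
    | zero => simpa using J.zero_mem
    | add a b _ _ ha hb => simpa [add_mul] using J.add_mem ha hb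
    | neg a _ ha => simpa [neg_mul] using J.neg_mem ha
  -- conclude
  ext a
  constructor
  · exact fun ha => hJsub ha
  · intro ha
    have ha' : a ∈ TwoSidedIdeal.span S := hspanS ▸ ha
    rw [TwoSidedIdeal.mem_span_iff_mem_addSubgroup_closure] at ha'
    refine (AddSubgroup.closure_le J).mpr ?_ ha'
    rintro g ⟨-, ⟨r, -, b, ⟨u', hu', v', hv', rfl⟩, rfl⟩, t, -, rfl⟩
    show r * (u' * v') * t ∈ J
    have h1 : r * (u' * v') * t = (r * u') * (v' * t) := by noncomm_ring
    rw [h1]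
    exact hprod _ (I.mul_mem_left r u' hu') _ (I.mul_mem_right v' t hv')
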